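/- Let K < ∞ and let (X,d) be a K-TSP-efficient metric space. Then X is D-doubling with D ≤ 4K+1. -/

import Mathlib

open Metric Set
open scoped Classical ENNReal NNReal

noncomputable section

/-- The underlying set of the lamplighter space over `X`: a lamp configuration
(a finite set of lit lamps) together with the position of the lamplighter. -/
abbrev Lamp (X : Type*) := Finset X × X

namespace Lamplighter

variable {X Y Z : Type*}

/-- The length of the path visiting the points of a list in order,
with respect to the distance function `d`. -/
def pathLength (d : X → X → ℝ) : List X → ℝ
  | [] => 0
  | [_] => 0
  | x :: y :: l => d x y + pathLength d (y :: l)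

/-- The symmetric difference of the lamp configurations of `p` and `q`, as a set. -/
def sd (p q : Lamp X) : Set X :=
  ((p.1 : Set X) \ (q.1 : Set X)) ∪ ((q.1 : Set X) \ (p.1 : Set X))

/-- The traveling salesman semimetric on the lamplighter space:
the infimum of lengths of finite paths starting at `p.2`, ending at `q.2`, and
visiting every point of the symmetric difference of the configurations. -/
def TSP (d : X → X → ℝ) (p q : Lamp X) : ℝ :=
  sInf { s : ℝ | ∃ l : List X, l.head? = some p.2 ∧ l.getLast? = some q.2 ∧
    (∀ a ∈ sd p q, a ∈ l) ∧ s = pathLength d l }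

/-- The diameter (in `ℝ≥0∞`) of a set with respect to a distance function `d`. -/
def ediamD (d : X → X → ℝ) (A : Set X) : ℝ≥0∞ :=
  ⨆ x ∈ A, ⨆ y ∈ A, ENNReal.ofReal (d x y)

/-- The traveling salesman shortcut semimetric:
`TSCP((A,x),(B,y)) = diam({x,y} ∪ (A Δ B))`. -/
def TSCP (d : X → X → ℝ) (p q : Lamp X) : ℝ :=
  (ediamD d ({p.2, q.2} ∪ sd p q)).toReal

/-- `ρ((A,x),(B,y))` is `0` if `A = B` and `1` otherwise. -/
def rho (p q : Lamp X) : ℝ := if p.1 = q.1 then 0 else 1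

/-- The lamplighter metric `d_La = TSP + ρ`. -/
def dLa (d : X → X → ℝ) (p q : Lamp X) : ℝ := TSP d p q + rho p q

/-- `X` is `K`-TSP-efficient if `TSP ≤ K • TSCP` on `La(X)²`. -/
def TSPEfficient (d : X → X → ℝ) (K : ℝ) : Prop :=
  ∀ p q : Lamp X, TSP d p q ≤ K * TSCP d p q

/-- A weak `C`-biLipschitz embedding between spaces with distance functions `dY`, `dZ`:
a family of maps `φ t : Y → Z` (for `t > 0`) such that each `φ t` is `σ t`-Lipschitz
and `dY x y ≥ C*t` implies `dZ (φ t x) (φ t y) ≥ t * σ t`. -/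
def WeakBiLip (dY : Y → Y → ℝ) (dZ : Z → Z → ℝ) (C : ℝ) : Prop :=
  ∃ φ : ℝ → Y → Z, ∀ t : ℝ, 0 < t → ∃ σ : ℝ, 0 < σ ∧
    (∀ x y : Y, dZ (φ t x) (φ t y) ≤ σ * dY x y) ∧
    (∀ x y : Y, C * t ≤ dY x y → t * σ ≤ dZ (φ t x) (φ t y))

/-- `f` is a `C`-biLipschitz embedding (an injective map of biLipschitz
distortion at most `C`, allowing an overall scaling factor `s`). -/
def BiLipWith (dY : Y → Y → ℝ) (dZ : Z → Z → ℝ) (C : ℝ) (f : Y → Z) : Prop :=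
  Function.Injective f ∧ ∃ s : ℝ, 0 < s ∧
    ∀ x y : Y, s * dY x y ≤ dZ (f x) (f y) ∧ dZ (f x) (f y) ≤ C * s * dY x y

/-- Nagata dimension at most `n` with constant at most `γ`: for every scale `s > 0`
there is a covering by sets of diameter at most `γ s` such that every set of diameter
less than `s` meets at most `n + 1` members of the covering. -/
def NagataDimD (d : Y → Y → ℝ) (n : ℕ) (γ : ℝ) : Prop :=
  ∀ s : ℝ, 0 < s → ∃ B : Set (Set Y),
    (∀ y : Y, ∃ b ∈ B, y ∈ b) ∧
    (∀ b ∈ B, ediamD d b ≤ ENNReal.ofReal (γ * s)) ∧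
    (∀ A : Set Y, ediamD d A < ENNReal.ofReal s →
      {b | b ∈ B ∧ (b ∩ A).Nonempty}.encard ≤ ((n : ℕ∞) + 1))

/-- Markov type 2 with constant `M`, for the distance function `d`: for every stationary
reversible Markov chain on a finite state space (given by a stationary distribution `μ`
and a reversible stochastic transition matrix `P`), every map `f` into the space, and
every time `t`, `E[d(f(Z_t),f(Z_0))²] ≤ M² t E[d(f(Z_1),f(Z_0))²]`. -/
def HasMarkovType2 (d : Y → Y → ℝ) (M : ℝ) : Prop :=
  ∀ (n : ℕ) (μ : Fin n → ℝ) (P : Matrix (Fin n) (Fin n) ℝ),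
    (∀ i, 0 ≤ μ i) → (∑ i, μ i) = 1 →
    (∀ i j, 0 ≤ P i j) → (∀ i, (∑ j, P i j) = 1) →
    (∀ i j, μ i * P i j = μ j * P j i) →
    ∀ (f : Fin n → Y) (t : ℕ),
      (∑ i, ∑ j, μ i * (P ^ t) i j * d (f i) (f j) ^ 2) ≤
        M ^ 2 * t * ∑ i, ∑ j, μ i * P i j * d (f i) (f j) ^ 2

/-- `D`-doubling: every ball of radius `r` can be covered by `D` balls of radius `r/2`. -/
def Doubling (d : Y → Y → ℝ) (D : ℕ) : Prop :=
  ∀ r : ℝ, 0 < r → ∀ x : Y, ∃ c : Fin D → Y,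
    ∀ y : Y, d x y ≤ r → ∃ i, d (c i) y ≤ r / 2

/-- `A` is an arc from `x` to `y`: the image of an injective continuous map of `[0,1]`
sending the endpoints to `x` and `y`. -/
def IsArc {T : Type*} [MetricSpace T] (x y : T) (A : Set T) : Prop :=
  ∃ γ : ℝ → T, ContinuousOn γ (Icc 0 1) ∧ InjOn γ (Icc 0 1) ∧
    γ 0 = x ∧ γ 1 = y ∧ γ '' (Icc 0 1) = A

/-- `A` is a geodesic segment from `x` to `y`: the image of an isometric embedding
of `[0, dist x y]` sending the endpoints to `x` and `y`. -/
def IsGeodesicSeg {T : Type*} [MetricSpace T] (x y : T) (A : Set T) : Prop :=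
  ∃ γ : ℝ → T, γ 0 = x ∧ γ (dist x y) = y ∧
    (∀ s ∈ Icc (0 : ℝ) (dist x y), ∀ t ∈ Icc (0 : ℝ) (dist x y),
      dist (γ s) (γ t) = |s - t|) ∧
    γ '' (Icc 0 (dist x y)) = A

/-- `T` is an ℝ-tree: any two (distinct) points are joined by a unique arc,
and this arc is a geodesic. -/
def IsRTree (T : Type*) [MetricSpace T] : Prop :=
  ∀ x y : T, x ≠ y →
    (∃ A : Set T, IsArc x y A) ∧
    (∀ A A' : Set T, IsArc x y A → IsArc x y A' → A = A') ∧
    (∀ A : Set T, IsArc x y A → IsGeodesicSeg x y A)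

/-- The sup (ℓ∞-product) distance on a finite product of metric spaces. -/
def piSupDist {n : ℕ} {T : Fin n → Type*} (I : ∀ i, MetricSpace (T i)) :
    (∀ i, T i) → (∀ i, T i) → ℝ :=
  letI := I
  fun f g => dist f g

/-- The ℓ1-product distance on a finite product of metric spaces. -/
def piL1Dist {n : ℕ} {T : Fin n → Type*} (I : ∀ i, MetricSpace (T i)) :
    (∀ i, T i) → (∀ i, T i) → ℝ :=
  letI := I
  fun f g => ∑ i, dist (f i) (g i)

/-- The ℓ1 distance on `ℝ^m`. -/
def l1Dist (m : ℕ) (x y : Fin m → ℝ) : ℝ := ∑ i, |x i - y i|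

/-- The ℓp distance on `ℝ^m`. -/
def lpDist (m : ℕ) (p : ℝ) (x y : Fin m → ℝ) : ℝ :=
  (∑ i, |x i - y i| ^ p) ^ (1 / p)

/-- The (pseudo)distance of the ℝ-star over the index type `ι`: the wedge sum of
copies of `[0,∞)` indexed by `ι`, glued at `0`. -/
def starDist {ι : Type*} (p q : ι × ℝ≥0) : ℝ :=
  if p.1 = q.1 then |(p.2 : ℝ) - (q.2 : ℝ)| else (p.2 : ℝ) + (q.2 : ℝ)

/-- The sup (ℓ∞-product) of finitely many distance functions. -/
def supD {n : ℕ} {T : Fin n → Type*} (d : ∀ i, T i → T i → ℝ) (f g : ∀ i, T i) : ℝ :=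
  ((Finset.univ.sup fun i => (d i (f i) (g i)).toNNReal : ℝ≥0) : ℝ)

/-- The infimum of distortions of biLipschitz embeddings of `(Y, dY)` into `(Z, dZ)`
(`∞` if there is no such embedding). -/
def cEmb (dY : Y → Y → ℝ) (dZ : Z → Z → ℝ) : ℝ≥0∞ :=
  sInf { D : ℝ≥0∞ | ∃ C : ℝ, 0 < C ∧ D = ENNReal.ofReal C ∧
    ∃ f : Y → Z, BiLipWith dY dZ C f }

/-- `c_1^{m,dom}(X,d)`: the infimum of all `D > 0` such that there exist injective
`1`-Lipschitz maps `φ i : X → ℝ` and weights `α i ≥ 0` summing to `1` with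
`∑ i, α i * |φ i x - φ i y| ≥ d x y / D` for all `x y` (`∞` if there is none). -/
def c1dom (d : X → X → ℝ) (m : ℕ) : ℝ≥0∞ :=
  sInf { D : ℝ≥0∞ | ∃ C : ℝ, 0 < C ∧ D = ENNReal.ofReal C ∧
    ∃ (φ : Fin m → X → ℝ) (α : Fin m → ℝ),
      (∀ i, Function.Injective (φ i)) ∧
      (∀ i, ∀ x y : X, |φ i x - φ i y| ≤ d x y) ∧
      (∀ i, 0 ≤ α i) ∧ (∑ i, α i) = 1 ∧
      ∀ x y : X, d x y / C ≤ ∑ i, α i * |φ i x - φ i y| }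

/-- The Hamming distance on the Hamming cube `{0,1}^M`, as a real number. -/
def hamDist {M : ℕ} (x y : Fin M → Bool) : ℝ :=
  ((Finset.univ.filter fun i => x i ≠ y i).card : ℝ)

/-- The star graph `St_{n,k}`: the one-point coalescence of `n` paths of length `k`,
realized inside `ℤ^n` as the multiples `α eᵢ` with `0 ≤ α ≤ k`. -/
def St (n k : ℕ) : Type :=
  {x : Fin n → ℤ // ∃ i : Fin n, (∀ j : Fin n, j ≠ i → x j = 0) ∧ 0 ≤ x i ∧ x i ≤ (k : ℤ)}

/-- The ℓ1 metric on the star graph `St_{n,k}`. -/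
def stDist {n k : ℕ} (x y : St n k) : ℝ := ∑ j, |(x.1 j : ℝ) - (y.1 j : ℝ)|

/-- The endpoint `k eᵢ` of the `i`-th branch of the star graph. -/
def St.endpoint {n k : ℕ} (i : Fin n) : St n k :=
  ⟨fun j => if j = i then (k : ℤ) else 0, i, fun j hj => if_neg hj, by simp, by simp⟩

/-- The cycle metric on `ℤ/nℤ`. -/
def cycDist {n : ℕ} (a b : ZMod n) : ℝ := ((min ((a - b).val) ((b - a).val) : ℕ) : ℝ)

/-- The rectangular grid `G_{k,n} = ([0,k] ∩ ℤ) × ([0,n] ∩ ℤ)`. -/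
def Grid2 (k n : ℕ) : Type :=
  {p : ℤ × ℤ // 0 ≤ p.1 ∧ p.1 ≤ (k : ℤ) ∧ 0 ≤ p.2 ∧ p.2 ≤ (n : ℤ)}

/-- The ℓ1 metric on the grid `G_{k,n}`. -/
def grid2Dist {k n : ℕ} (x y : Grid2 k n) : ℝ :=
  |(x.1.1 : ℝ) - (y.1.1 : ℝ)| + |(x.1.2 : ℝ) - (y.1.2 : ℝ)|

/-- The `m`-dimensional grid `G^m({n_i}) = ∏ i, ([0, n_i] ∩ ℤ)`. -/
def GridM (m : ℕ) (n : Fin m → ℕ) : Type :=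
  {p : Fin m → ℤ // ∀ i, 0 ≤ p i ∧ p i ≤ (n i : ℤ)}

/-- The ℓ1 metric on the `m`-dimensional grid. -/
def gridMDist {m : ℕ} {n : Fin m → ℕ} (x y : GridM m n) : ℝ :=
  ∑ i, |(x.1 i : ℝ) - (y.1 i : ℝ)|

section Aux

variable {W : Type*} [MetricSpace W]

theorem pathLength_nonneg : ∀ l : List W, 0 ≤ pathLength dist l
  | [] => le_refl 0
  | [_] => le_refl 0
  | a :: b :: t => by
      have h := pathLength_nonneg (b :: t)
      simp only [pathLength]
      exact add_nonneg dist_nonneg h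

theorem pathLength_cons_le (a : W) : ∀ l : List W,
    pathLength dist l ≤ pathLength dist (a :: l)
  | [] => le_refl 0
  | b :: t => by
      simp only [pathLength]
      linarith [dist_nonneg (x := a) (y := b)]

theorem pathLength_cons_cons (a b : W) : ∀ l : List W,
    pathLength dist (a :: l) ≤ pathLength dist (a :: b :: l)
  | [] => by simp [pathLength, dist_nonneg]
  | c :: t => by
      simp only [pathLength]
      have h := dist_triangle a b c
      linarith

theorem pathLength_sublist_cons {l₁ l₂ : List W} (h : List.Sublist l₁ l₂) (a : W) :
    pathLength dist (a :: l₁) ≤ pathLength dist (a :: l₂) := by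
  induction h generalizing a with
  | slnil => exact le_refl _
  | cons b _ ih => exact (ih a).trans (pathLength_cons_cons a b _)
  | cons_cons b h ih =>
      simp only [pathLength]
      exact add_le_add_right (ih b) _

theorem pathLength_sublist {l₁ l₂ : List W} (h : List.Sublist l₁ l₂) :
    pathLength dist l₁ ≤ pathLength dist l₂ := by
  induction h with
  | slnil => exact le_refl _
  | cons b _ ih => exact ih.trans (pathLength_cons_le b _)
  | cons_cons b h _ => exact pathLength_sublist_cons h b

theorem pathLength_lower {s : ℝ} (hs : 0 ≤ s) :
    ∀ l : List W, l.Chain' (fun a b => s ≤ dist a b) →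
      s * ((l.length : ℝ) - 1) ≤ pathLength dist l
  | [] => by intro _; simp [pathLength]; nlinarith
  | [a] => by intro _; simp [pathLength]
  | a :: b :: t => by
      intro h
      have h1 : s ≤ dist a b := (List.isChain_cons_cons.mp h).1
      have h2 := pathLength_lower hs (b :: t) (List.isChain_cons_cons.mp h).2
      simp only [pathLength, List.length_cons] at *
      push_cast at *
      linarith

theorem card_le_of_sep {Y : Type*} [MetricSpace Y] {K r : ℝ} (hK : 0 ≤ K)
    (hX : TSPEfficient (dist : Y → Y → ℝ) K) (hr : 0 < r) (x : Y)
    (A : Finset Y) (hball : ∀ a ∈ A, dist x a ≤ r)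
    (hsep : ∀ a ∈ A, ∀ b ∈ A, a ≠ b → r / 2 < dist a b) :
    (A.card : ℝ) ≤ 4 * K + 1 := by
  set p : Lamp Y := (A, x) with hp
  set q : Lamp Y := ((∅ : Finset Y), x) with hq
  have hsd : sd p q = (↑A : Set Y) := by simp [sd, hp, hq]
  -- lower bound on TSP
  have hlow : r / 2 * ((A.card : ℝ) - 1) ≤ TSP dist p q := by
    apply le_csInf
    · refine ⟨pathLength dist ((x :: A.toList) ++ [x]),
        (x :: A.toList) ++ [x], rfl, List.getLast?_concat, ?_, rfl⟩
      intro a ha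
      rw [hsd] at ha
      simp only [List.mem_append, List.mem_cons]
      exact Or.inl (Or.inr (Finset.mem_toList.mpr ha))
    · rintro s ⟨l, hhead, hlast, hmem, rfl⟩
      set l' := (l.filter (fun y => y ∈ A)).dedup with hl'
      have hsub : List.Sublist l' l := (List.dedup_sublist _).trans List.filter_sublist
      have h1 : pathLength dist l' ≤ pathLength dist l := pathLength_sublist hsub
      have hmem' : ∀ a, a ∈ l' ↔ a ∈ A := by
        intro a
        simp only [hl', List.mem_dedup, List.mem_filter, decide_eq_true_eq]
        refine ⟨fun h => h.2, fun h => ⟨?_, h⟩⟩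
        exact hmem a (by rw [hsd]; exact h)
      have hnd : l'.Nodup := List.nodup_dedup _
      have hlen : l'.length = A.card := by
        have hTF : l'.toFinset = A := by
          ext a; rw [List.mem_toFinset]; exact hmem' a
        rw [← hTF, List.toFinset_card_of_nodup hnd]
      have hchain : l'.Chain' (fun a b => r / 2 ≤ dist a b) := by
        rw [List.Chain', List.isChain_iff_getElem]
        intro i hi
        have hi1 : i < l'.length := by omega
        have hi2 : i + 1 < l'.length := by omega
        have hA1 : l'.get ⟨i, hi1⟩ ∈ A := (hmem' _).mp (l'.get_mem _)
        have hA2 : l'.get ⟨i + 1, hi2⟩ ∈ A := (hmem' _).mp (l'.get_mem _)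
        have hne : l'.get ⟨i, hi1⟩ ≠ l'.get ⟨i + 1, hi2⟩ := by
          intro hcontra
          have := (List.Nodup.get_inj_iff hnd).mp hcontra
          simp at this
        exact le_of_lt (hsep _ hA1 _ hA2 hne)
      have h3 := pathLength_lower (by linarith : (0 : ℝ) ≤ r / 2) l' hchain
      rw [hlen] at h3
      linarith
  -- upper bound on TSCP
  have hTSCP : TSCP dist p q ≤ 2 * r := by
    have hset : ({p.2, q.2} ∪ sd p q : Set Y) = {x} ∪ (↑A : Set Y) := by
      rw [hsd]; simp [hp, hq]
    have hbd : ediamD dist ({x} ∪ (↑A : Set Y)) ≤ ENNReal.ofReal (2 * r) := by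
      unfold ediamD
      refine iSup₂_le fun a ha => iSup₂_le fun b hb => ?_
      apply ENNReal.ofReal_le_ofReal
      have hax : dist x a ≤ r := by
        rcases ha with rfl | ha
        · simp; linarith
        · exact hball a ha
      have hbx : dist x b ≤ r := by
        rcases hb with rfl | hb
        · simp; linarith
        · exact hball b hb
      calc dist a b ≤ dist a x + dist x b := dist_triangle a x b
        _ ≤ 2 * r := by rw [dist_comm a x]; linarith
    unfold TSCP
    rw [hset]
    exact ENNReal.toReal_le_of_le_ofReal (by linarith) hbd
  have h2 := hX p q
  nlinarith [hlow, h2, mul_le_mul_of_nonneg_left hTSCP hK, hr]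

end Aux

/-- A `K`-TSP-efficient metric space is `D`-doubling with `D ≤ 4K + 1`. -/
theorem statement4 (X : Type u) [MetricSpace X] (K : ℝ) (hK : 0 ≤ K)
    (hX : TSPEfficient (dist : X → X → ℝ) K) :
    ∃ D : ℕ, (D : ℝ) ≤ 4 * K + 1 ∧ Doubling (dist : X → X → ℝ) D := by
  refine ⟨⌊4 * K⌋₊ + 1, ?_, ?_⟩
  · push_cast
    have := Nat.floor_le (by linarith : (0 : ℝ) ≤ 4 * K)
    linarith
  · intro r hr x
    set D := ⌊4 * K⌋₊ + 1 with hD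
    set S : Set ℕ := {n | ∃ A : Finset X, (∀ a ∈ A, dist x a ≤ r) ∧
      (∀ a ∈ A, ∀ b ∈ A, a ≠ b → r / 2 < dist a b) ∧ A.card = n} with hS
    have hS0 : 0 ∈ S := ⟨∅, by simp, by simp, rfl⟩
    have hSbdd : ∀ n ∈ S, n ≤ D := by
      rintro n ⟨A, h1, h2, rfl⟩
      have hc := card_le_of_sep hK hX hr x A h1 h2
      have h4 : A.card ≤ ⌊4 * K + 1⌋₊ := Nat.le_floor (by linarith)
      calc A.card ≤ ⌊4 * K + 1⌋₊ := h4
        _ = D := by rw [Nat.floor_add_one (by linarith : (0 : ℝ) ≤ 4 * K)]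
    have hbdd : BddAbove S := ⟨D, fun n hn => hSbdd n hn⟩
    have hNS : sSup S ∈ S := Nat.sSup_mem ⟨0, hS0⟩ hbdd
    obtain ⟨A, hA1, hA2, hA3⟩ := hNS
    refine ⟨fun i => A.toList.getD i x, ?_⟩
    intro y hy
    by_cases hcov : ∃ a ∈ A, dist a y ≤ r / 2
    · obtain ⟨a, haA, hay⟩ := hcov
      have hmem : a ∈ A.toList := Finset.mem_toList.mpr haA
      obtain ⟨k, hk⟩ := List.get_of_mem hmem
      have hlenD : A.toList.length ≤ D := by
        rw [Finset.length_toList, hA3]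
        exact hSbdd _ ⟨A, hA1, hA2, hA3⟩
      have hkD : (k : ℕ) < D := lt_of_lt_of_le k.isLt hlenD
      refine ⟨⟨k, hkD⟩, ?_⟩
      show dist (A.toList.getD (k : ℕ) x) y ≤ r / 2
      have hg : A.toList.getD (k : ℕ) x = a := by
        rw [List.getD_eq_getElem _ _ k.isLt]
        simpa using hk
      rw [hg]; exact hay
    · exfalso
      push_neg at hcov
      have hyA : y ∉ A := by
        intro h
        have := hcov y h
        simp at this
        linarith
      have hins : sSup S + 1 ∈ S := by
        refine ⟨insert y A, ?_, ?_, ?_⟩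
        · intro a ha
          rcases Finset.mem_insert.mp ha with rfl | ha
          · exact hy
          · exact hA1 a ha
        · intro a ha b hb hab
          rcases Finset.mem_insert.mp ha with ha' | ha' <;>
            rcases Finset.mem_insert.mp hb with hb' | hb'
          · exact absurd (ha'.trans hb'.symm) hab
          · subst ha'; rw [dist_comm]; exact hcov b hb'
          · subst hb'; exact hcov a ha'
          · exact hA2 a ha' b hb' hab
        · rw [Finset.card_insert_of_notMem hyA, hA3]
      have := le_csSup hbdd hins
      omega

end Lamplighter
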